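/- Let I be an open real interval containing [0, 1] and φ ∈ C^{1,1}(I) (φ differentiable with locally Lipschitz derivative φ'). Then there exists t₀ ∈ (0, 1) such that φ(1) − φ(0) − φ'(0) ∈ ½ ∂φ'(t₀), where ∂φ'(t₀) is the Clarke subdifferential of φ' at t₀. -/

import Mathlib

open Filter Set

/-- The Clarke generalized directional derivative of `g` at `x₀` in direction `h`. -/
noncomputable def clarkeDeriv {X : Type*} [NormedAddCommGroup X] [NormedSpace ℝ X]
    (g : X → ℝ) (x₀ h : X) : ℝ :=
  Filter.limsup (fun p : X × ℝ => (g (p.1 + p.2 • h) - g p.1) / p.2)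
    ((nhds x₀) ×ˢ (nhdsWithin 0 (Set.Ioi 0)))

/-- The Clarke subdifferential of `g` at `x₀`. -/
def clarkeSubdiff {X : Type*} [NormedAddCommGroup X] [NormedSpace ℝ X]
    (g : X → ℝ) (x₀ : X) : Set (X →L[ℝ] ℝ) :=
  {L | ∀ h, L h ≤ clarkeDeriv g x₀ h}

/-- `f'` is the Gâteaux derivative of `f` on `D`. -/
def IsGateauxDerivOn {X E : Type*} [NormedAddCommGroup X] [NormedSpace ℝ X]
    [NormedAddCommGroup E] [NormedSpace ℝ E]
    (f : X → E) (f' : X → X →L[ℝ] E) (D : Set X) : Prop :=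
  ∀ x ∈ D, ∀ h : X, HasDerivAt (fun t : ℝ => f (x + t • h)) (f' x h) 0

/-- `g` is locally Lipschitz on the set `D`. -/
def LocallyLipschitzOnSet {X E : Type*} [NormedAddCommGroup X] [NormedSpace ℝ X]
    [NormedAddCommGroup E] (g : X → E) (D : Set X) : Prop :=
  ∀ x ∈ D, ∃ ε > 0, ∃ K : NNReal, LipschitzOnWith K g (Metric.ball x ε ∩ D)

/-- `f` is of class `C^{1,1}` on `D`, witnessed by its Gâteaux derivative `f'`. -/
def IsC11On {X : Type*} [NormedAddCommGroup X] [NormedSpace ℝ X]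
    (f : X → ℝ) (f' : X → X →L[ℝ] ℝ) (D : Set X) : Prop :=
  IsGateauxDerivOn f f' D ∧ LocallyLipschitzOnSet f' D

/-- The second-order subdifferential `∂²f(x₀)(d) = ∂⟨f'(·), d⟩(x₀)`. -/
def secondSubdiff {X : Type*} [NormedAddCommGroup X] [NormedSpace ℝ X]
    (f' : X → X →L[ℝ] ℝ) (x₀ d : X) : Set (X →L[ℝ] ℝ) :=
  clarkeSubdiff (fun x => f' x d) x₀

/-- The Clarke subdifferential of a real function of a real variable, as a set of reals. -/
def realClarkeSubdiff (g : ℝ → ℝ) (t₀ : ℝ) : Set ℝ :=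
  {s : ℝ | ∀ h : ℝ, s * h ≤ clarkeDeriv g t₀ h}


lemma chain_anti {g : ℝ → ℝ} {a b : ℝ} (hab : a < b)
    (H : ∀ t ∈ Set.Icc a b, ∃ δ > 0, ∀ u v : ℝ, |u - t| < δ → |v - t| < δ → u < v → g v < g u) :
    g b < g a := by
  set S : Set ℝ := {t | t ∈ Set.Icc a b ∧ ∀ s, a < s → s ≤ t → g s < g a} with hS
  have haS : a ∈ S := ⟨⟨le_refl a, hab.le⟩, fun s hs hsa => absurd (lt_of_lt_of_le hs hsa) (lt_irrefl a)⟩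
  have hne : S.Nonempty := ⟨a, haS⟩
  have hbdd : BddAbove S := ⟨b, fun t ht => ht.1.2⟩
  set c := sSup S with hc
  have hac : a ≤ c := le_csSup hbdd haS
  have hcb : c ≤ b := csSup_le hne (fun t ht => ht.1.2)
  obtain ⟨δ, hδ, hloc⟩ := H c ⟨hac, hcb⟩
  have Plt : ∀ s, a < s → s < c → g s < g a := by
    intro s hs hsc
    obtain ⟨t, htS, hst⟩ := exists_lt_of_lt_csSup hne hsc
    exact htS.2 s hs hst.le
  have Pc : ∀ s, a < s → s ≤ c → g s < g a := by
    intro s hs hsc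
    rcases lt_or_eq_of_le hsc with hlt | heq
    · exact Plt s hs hlt
    · rw [heq] at hs ⊢
      set u := max (c - δ/2) ((a+c)/2) with hu
      have hu1 : a < u := lt_of_lt_of_le (by linarith) (le_max_right _ _)
      have hu2 : u < c := max_lt (by linarith) (by linarith)
      have hu3 : |u - c| < δ := by
        rw [abs_sub_lt_iff]
        have h4 : c - δ/2 ≤ u := le_max_left _ _
        constructor <;> linarith
      have h1 : g c < g u := hloc u c hu3 (by simpa using hδ) hu2
      exact lt_trans h1 (Plt u hu1 hu2)
  rcases lt_or_eq_of_le hcb with hlt | heq2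
  · exfalso
    set t := min b (c + δ/2) with htdef
    have htc : c < t := lt_min hlt (by linarith)
    have htS : t ∈ S := by
      refine ⟨⟨le_trans hac htc.le, min_le_left _ _⟩, fun s hs hst => ?_⟩
      rcases le_or_gt s c with hsc | hcs
      · exact Pc s hs hsc
      · have h1 : g s < g c := by
          refine hloc c s (by simpa using hδ) ?_ hcs
          rw [abs_sub_lt_iff]
          have h4 : t ≤ c + δ/2 := min_le_right _ _
          constructor <;> linarith
        rcases eq_or_lt_of_le hac with heq | hac'
        · rw [heq]; exact h1
        · exact lt_trans h1 (Pc c hac' (le_refl c))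
    exact absurd (le_csSup hbdd htS) (not_le.mpr htc)
  · exact Pc b hab heq2.symm.le

lemma neg_on_Ioo {g : ℝ → ℝ} (hg0 : g 0 = 0) (hcont : ContinuousAt g 0)
    (hloc : ∀ t ∈ Set.Ioo (0:ℝ) 1, ∃ δ > 0, ∀ u v : ℝ, |u - t| < δ → |v - t| < δ → u < v → g v < g u) :
    ∀ t ∈ Set.Ioo (0:ℝ) 1, g t < 0 := by
  have pair : ∀ a b : ℝ, a ∈ Set.Ioo (0:ℝ) 1 → b ∈ Set.Ioo (0:ℝ) 1 → a < b → g b < g a := by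
    intro a b ha hb hab
    exact chain_anti hab (fun u hu => hloc u ⟨lt_of_lt_of_le ha.1 hu.1, lt_of_le_of_lt hu.2 hb.2⟩)
  intro t ht
  have ht2 : t/2 ∈ Set.Ioo (0:ℝ) 1 := ⟨by linarith [ht.1], by linarith [ht.2]⟩
  have h1 : g t < g (t/2) := pair (t/2) t ht2 ht (by linarith [ht.1])
  have h2 : g (t/2) ≤ 0 := by
    have htend : Tendsto g (nhdsWithin 0 (Set.Ioi 0)) (nhds 0) := by
      have h0 : Tendsto g (nhds 0) (nhds (g 0)) := hcont.tendsto
      rw [hg0] at h0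
      exact h0.mono_left nhdsWithin_le_nhds
    refine ge_of_tendsto htend ?_
    filter_upwards [Ioo_mem_nhdsGT_of_mem (⟨le_refl 0, ht2.1⟩ : (0:ℝ) ∈ Set.Ico 0 (t/2))] with u hu
    exact (pair u (t/2) ⟨hu.1, lt_trans hu.2 ht2.2⟩ ht2 hu.2).le
  linarith

lemma exists_nonmono {g : ℝ → ℝ} (hg0 : g 0 = 0)
    (hcont : ∀ t ∈ Set.Icc (0:ℝ) 1, ContinuousAt g t)
    {ψ : ℝ → ℝ} (hψd : ∀ t ∈ Set.Icc (0:ℝ) 1, HasDerivAt ψ (g t) t)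
    (hψ0 : ψ 0 = 0) (hψ1 : ψ 1 = 0) :
    ∃ t₀ ∈ Set.Ioo (0:ℝ) 1,
      (¬ ∃ δ > 0, ∀ u v : ℝ, |u - t₀| < δ → |v - t₀| < δ → u < v → g v < g u) ∧
      (¬ ∃ δ > 0, ∀ u v : ℝ, |u - t₀| < δ → |v - t₀| < δ → u < v → g u < g v) := by
  by_contra hcon
  set A : Set ℝ := {t | ∃ δ > 0, ∀ u v : ℝ, |u - t| < δ → |v - t| < δ → u < v → g v < g u} with hA
  set B : Set ℝ := {t | ∃ δ > 0, ∀ u v : ℝ, |u - t| < δ → |v - t| < δ → u < v → g u < g v} with hB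
  have hopen : ∀ (C : Set ℝ) (R : ℝ → ℝ → Prop),
      C = {t | ∃ δ > 0, ∀ u v : ℝ, |u - t| < δ → |v - t| < δ → u < v → R (g u) (g v)} → IsOpen C := by
    intro C R hC
    rw [Metric.isOpen_iff]
    intro t ht
    rw [hC] at ht
    obtain ⟨δ, hδ, hp⟩ := ht
    refine ⟨δ/2, by linarith, fun t' ht' => ?_⟩
    rw [Metric.mem_ball, Real.dist_eq] at ht'
    rw [hC]
    refine ⟨δ/2, by linarith, fun u v hu hv huv => hp u v ?_ ?_ huv⟩
    · calc |u - t| ≤ |u - t'| + |t' - t| := abs_sub_le _ _ _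
        _ < δ := by linarith
    · calc |v - t| ≤ |v - t'| + |t' - t| := abs_sub_le _ _ _
        _ < δ := by linarith
  have hAopen : IsOpen A := hopen A (fun x y => y < x) rfl
  have hBopen : IsOpen B := hopen B (fun x y => x < y) rfl
  have hdisj : Disjoint A B := by
    rw [Set.disjoint_left]
    rintro t ⟨δ₁, hδ₁, p1⟩ ⟨δ₂, hδ₂, p2⟩
    obtain ⟨m, hm0, hm1, hm2⟩ : ∃ m : ℝ, 0 < m ∧ m < δ₁ ∧ m < δ₂ :=
      ⟨min δ₁ δ₂ / 2, by positivity,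
        by have := min_le_left δ₁ δ₂; linarith,
        by have := min_le_right δ₁ δ₂; linarith⟩
    have habs : |t + m - t| = m := by
      rw [show t + m - t = m by ring]; exact abs_of_pos hm0
    have hlt : t < t + m := by linarith
    have c1 := p1 t (t + m) (by simpa using hδ₁) (by rw [habs]; linarith) hlt
    have c2 := p2 t (t + m) (by simpa using hδ₂) (by rw [habs]; linarith) hlt
    linarith
  have hcover : Set.Ioo (0:ℝ) 1 ⊆ A ∪ B := by
    intro t ht
    by_contra hnot
    simp only [Set.mem_union, not_or] at hnot
    exact hcon ⟨t, ht, hnot.1, hnot.2⟩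
  rcases isPreconnected_Ioo.subset_or_subset hAopen hBopen hdisj hcover with hsub | hsub
  · have hneg := neg_on_Ioo hg0 (hcont 0 ⟨le_refl 0, by norm_num⟩) (fun t ht => hsub ht)
    have hanti : StrictAntiOn ψ (Set.Icc 0 1) := by
      refine strictAntiOn_of_deriv_neg (convex_Icc 0 1)
        (fun t ht => (hψd t ht).continuousAt.continuousWithinAt) (fun x hx => ?_)
      rw [interior_Icc] at hx
      rw [(hψd x ⟨hx.1.le, hx.2.le⟩).deriv]
      exact hneg x hx
    have := hanti (Set.left_mem_Icc.mpr zero_le_one) (Set.right_mem_Icc.mpr zero_le_one) zero_lt_one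
    linarith
  · have hneg := neg_on_Ioo (g := fun t => -g t) (by simp [hg0])
      ((hcont 0 ⟨le_refl 0, by norm_num⟩).neg)
      (fun t ht => by
        obtain ⟨δ, hδ, hp⟩ := hsub ht
        exact ⟨δ, hδ, fun u v hu hv huv => by simpa using hp u v hu hv huv⟩)
    have hmono : StrictMonoOn ψ (Set.Icc 0 1) := by
      refine strictMonoOn_of_deriv_pos (convex_Icc 0 1)
        (fun t ht => (hψd t ht).continuousAt.continuousWithinAt) (fun x hx => ?_)
      rw [interior_Icc] at hx
      rw [(hψd x ⟨hx.1.le, hx.2.le⟩).deriv]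
      have := hneg x hx
      simpa using this
    have := hmono (Set.left_mem_Icc.mpr zero_le_one) (Set.right_mem_Icc.mpr zero_le_one) zero_lt_one
    linarith

theorem stmt7 {I : Set ℝ} (hI : IsOpen I) (hI01 : Set.Icc (0:ℝ) 1 ⊆ I)
    (φ φ' : ℝ → ℝ) (hφ : ∀ t ∈ I, HasDerivAt φ (φ' t) t)
    (hLip : LocallyLipschitzOnSet φ' I) :
    ∃ t₀ ∈ Set.Ioo (0:ℝ) 1, ∃ s ∈ realClarkeSubdiff φ' t₀,
      φ 1 - φ 0 - φ' 0 = (1 / 2) * s := by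
  have hcontI : ∀ t ∈ I, ContinuousAt φ' t := by
    intro t ht
    obtain ⟨ε, hε, K, hK⟩ := hLip t ht
    have hopen : IsOpen (Metric.ball t ε ∩ I) := Metric.isOpen_ball.inter hI
    exact hK.continuousOn.continuousAt
      (hopen.mem_nhds ⟨Metric.mem_ball_self hε, ht⟩)
  set r : ℝ := φ 1 - φ 0 - φ' 0 with hr
  set s : ℝ := 2 * r with hs
  set g : ℝ → ℝ := fun t => φ' t - φ' 0 - s * t with hgdef
  have hg0 : g 0 = 0 := by simp [hgdef]
  have hgcont : ∀ t ∈ Set.Icc (0:ℝ) 1, ContinuousAt g t := by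
    intro t ht
    exact ((hcontI t (hI01 ht)).sub continuousAt_const).sub
      (continuousAt_const.mul continuousAt_id)
  set ψ : ℝ → ℝ := fun t => φ t - φ 0 - t * φ' 0 - r * t^2 with hψdef
  have hψd : ∀ t ∈ Set.Icc (0:ℝ) 1, HasDerivAt ψ (g t) t := by
    intro t ht
    have h1 := (hφ t (hI01 ht)).sub_const (φ 0)
    have h2 : HasDerivAt (fun u : ℝ => u * φ' 0) (φ' 0) t := by
      simpa using (hasDerivAt_id t).mul_const (φ' 0)
    have h3 : HasDerivAt (fun u : ℝ => r * u^2) (r * (2*t)) t := by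
      simpa using (hasDerivAt_pow 2 t).const_mul r
    have h4 := (h1.sub h2).sub h3
    refine h4.congr_deriv ?_
    show φ' t - φ' 0 - r * (2 * t) = φ' t - φ' 0 - s * t
    rw [hs]
    ring
  have hψ0 : ψ 0 = 0 := by simp [hψdef]
  have hψ1 : ψ 1 = 0 := by simp only [hψdef]; rw [hr]; ring
  obtain ⟨t₀, ht₀, hNA, hNB⟩ := exists_nonmono hg0 hgcont hψd hψ0 hψ1
  refine ⟨t₀, ht₀, s, ?_, by rw [hs]; ring⟩
  intro h
  -- set up filter and quotient function
  set F := (nhds t₀) ×ˢ (nhdsWithin (0:ℝ) (Set.Ioi 0)) with hF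
  set q : ℝ × ℝ → ℝ := fun p => (φ' (p.1 + p.2 • h) - φ' p.1) / p.2 with hq
  have ht₀I : t₀ ∈ I := hI01 ⟨ht₀.1.le, ht₀.2.le⟩
  -- boundedness above
  obtain ⟨ε, hε, K, hK⟩ := hLip t₀ ht₀I
  obtain ⟨ε', hε', hball⟩ := Metric.isOpen_iff.1 hI t₀ ht₀I
  set ρ := min ε ε' with hρ
  have hρ0 : 0 < ρ := lt_min hε hε'
  have hK' : LipschitzOnWith K φ' (Metric.ball t₀ ρ) := by
    apply hK.mono
    intro x hx
    rw [Metric.mem_ball] at hx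
    exact ⟨Metric.mem_ball.2 (lt_of_lt_of_le hx (min_le_left _ _)),
      hball (Metric.mem_ball.2 (lt_of_lt_of_le hx (min_le_right _ _)))⟩
  have hbdd : ∀ᶠ p in F, q p ≤ K * |h| := by
    have e1 : ∀ᶠ t in nhds t₀, t ∈ Metric.ball t₀ (ρ/2) :=
      Metric.ball_mem_nhds t₀ (by linarith)
    have e2 : ∀ᶠ e in nhdsWithin (0:ℝ) (Set.Ioi 0), e ∈ Set.Ioo 0 (ρ/(2*(|h|+1))) :=
      Ioo_mem_nhdsGT_of_mem ⟨le_refl 0, by positivity⟩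
    filter_upwards [Filter.Eventually.prod_mk e1 e2] with p hp
    obtain ⟨hp1, hp2⟩ := hp
    rw [Metric.mem_ball, Real.dist_eq] at hp1
    have hε1 : 0 < p.2 := hp2.1
    have habs : |h| + 1 > 0 := by positivity
    have hmem1 : p.1 ∈ Metric.ball t₀ ρ := by
      rw [Metric.mem_ball, Real.dist_eq]; linarith
    have hmem2 : p.1 + p.2 • h ∈ Metric.ball t₀ ρ := by
      rw [Metric.mem_ball, Real.dist_eq, smul_eq_mul]
      have h1 : |p.1 + p.2 * h - t₀| ≤ |p.1 - t₀| + p.2 * |h| := by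
        calc |p.1 + p.2 * h - t₀| = |(p.1 - t₀) + p.2 * h| := by ring_nf
          _ ≤ |p.1 - t₀| + |p.2 * h| := abs_add_le _ _
          _ = |p.1 - t₀| + p.2 * |h| := by rw [abs_mul, abs_of_pos hε1]
      have h2 : p.2 * |h| < ρ/2 := by
        have := hp2.2
        have h3 : p.2 * |h| ≤ p.2 * (|h|+1) := by nlinarith
        have h4 : p.2 * (|h|+1) < ρ/(2*(|h|+1)) * (|h|+1) := by
          apply mul_lt_mul_of_pos_right hp2.2 habs
        have h5 : ρ/(2*(|h|+1)) * (|h|+1) = ρ/2 := by field_simp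
        linarith
      linarith
    have hdist := hK'.dist_le_mul _ hmem2 _ hmem1
    rw [Real.dist_eq, Real.dist_eq] at hdist
    have hd2 : |p.1 + p.2 • h - p.1| = p.2 * |h| := by
      rw [smul_eq_mul, show p.1 + p.2 * h - p.1 = p.2 * h by ring, abs_mul, abs_of_pos hε1]
    rw [hd2] at hdist
    have : φ' (p.1 + p.2 • h) - φ' p.1 ≤ K * (p.2 * |h|) :=
      le_trans (le_abs_self _) hdist
    rw [hq]
    rw [div_le_iff₀ hε1]
    calc φ' (p.1 + p.2 • h) - φ' p.1 ≤ K * (p.2 * |h|) := this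
      _ = K * |h| * p.2 := by ring
  have hbdd' : F.IsBoundedUnder (· ≤ ·) q := ⟨K * |h|, by
    rw [Filter.eventually_map]; exact hbdd⟩
  -- frequently bound below
  have hfreq : ∃ᶠ p in F, s * h ≤ q p := by
    rcases lt_trichotomy h 0 with hh | hh | hh
    · -- h < 0 : use hNB
      by_contra hcon
      rw [Filter.not_frequently] at hcon
      have hev : ∀ᶠ p in F, q p < s * h := hcon.mono (fun p hp => not_le.1 hp)
      rw [Filter.eventually_prod_iff] at hev
      obtain ⟨pa, hpa, pb, hpb, hpab⟩ := hev
      obtain ⟨δ₁, hδ₁, hpa'⟩ := Metric.eventually_nhds_iff.1 hpa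
      obtain ⟨W, hWopen, hW0, hWsub⟩ := mem_nhdsWithin.1 hpb
      obtain ⟨δ₂, hδ₂, hWball⟩ := Metric.isOpen_iff.1 hWopen 0 hW0
      apply hNB
      have hne : h ≠ 0 := ne_of_lt hh
      refine ⟨min δ₁ ((-h) * δ₂ / 2), lt_min hδ₁ (by nlinarith), fun u v hu hv huv => ?_⟩
      have hm1 := min_le_left δ₁ ((-h) * δ₂ / 2)
      have hm2 := min_le_right δ₁ ((-h) * δ₂ / 2)
      set e := (v - u) / (-h) with he
      have he0 : 0 < e := by apply div_pos (by linarith) (by linarith)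
      have heδ₂ : e < δ₂ := by
        rw [he, div_lt_iff₀ (by linarith : (0:ℝ) < -h)]
        have : v - u < 2 * min δ₁ ((-h) * δ₂ / 2) := by
          rw [abs_sub_lt_iff] at hu hv
          linarith [hu.1, hu.2, hv.1, hv.2]
        linarith
      have hpbe : pb e := by
        apply hWsub
        constructor
        · apply hWball; rw [Metric.mem_ball, Real.dist_eq, sub_zero, abs_of_pos he0]; exact heδ₂
        · exact he0
      have hpav : pa v := by
        apply hpa'
        rw [Real.dist_eq]
        exact lt_of_lt_of_le hv hm1
      have hkey := hpab hpav hpbe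
      have hve : v + e • h = u := by
        rw [smul_eq_mul, he, div_neg, neg_mul, div_mul_cancel₀ _ hne]
        ring
      rw [hq] at hkey
      simp only at hkey
      rw [hve] at hkey
      rw [div_lt_iff₀ he0] at hkey
      have he' : e * h = u - v := by
        rw [he, div_neg, neg_mul, div_mul_cancel₀ _ hne]
        ring
      have h6 : s * h * e = s * (u - v) := by rw [mul_assoc, mul_comm h e, he']
      rw [h6] at hkey
      show φ' u - φ' 0 - s * u < φ' v - φ' 0 - s * v
      linarith
    · -- h = 0
      apply Filter.Eventually.frequently
      filter_upwards [eventually_mem_nhdsWithin.prod_inr (nhds t₀)] with p hp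
      rw [hq, hh]
      simp
    · -- h > 0 : use hNA
      by_contra hcon
      rw [Filter.not_frequently] at hcon
      have hev : ∀ᶠ p in F, q p < s * h := hcon.mono (fun p hp => not_le.1 hp)
      rw [Filter.eventually_prod_iff] at hev
      obtain ⟨pa, hpa, pb, hpb, hpab⟩ := hev
      obtain ⟨δ₁, hδ₁, hpa'⟩ := Metric.eventually_nhds_iff.1 hpa
      obtain ⟨W, hWopen, hW0, hWsub⟩ := mem_nhdsWithin.1 hpb
      obtain ⟨δ₂, hδ₂, hWball⟩ := Metric.isOpen_iff.1 hWopen 0 hW0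
      apply hNA
      refine ⟨min δ₁ (h * δ₂ / 2), by positivity, fun u v hu hv huv => ?_⟩
      have hm1 := min_le_left δ₁ (h * δ₂ / 2)
      have hm2 := min_le_right δ₁ (h * δ₂ / 2)
      set e := (v - u) / h with he
      have he0 : 0 < e := by apply div_pos (by linarith) hh
      have heδ₂ : e < δ₂ := by
        rw [he, div_lt_iff₀ hh]
        have : v - u < 2 * min δ₁ (h * δ₂ / 2) := by
          rw [abs_sub_lt_iff] at hu hv
          linarith [hu.1, hu.2, hv.1, hv.2]
        linarith
      have hpbe : pb e := by
        apply hWsub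
        constructor
        · apply hWball; rw [Metric.mem_ball, Real.dist_eq, sub_zero, abs_of_pos he0]; exact heδ₂
        · exact he0
      have hpau : pa u := by
        apply hpa'
        rw [Real.dist_eq]
        exact lt_of_lt_of_le hu hm1
      have hne : h ≠ 0 := ne_of_gt hh
      have hkey := hpab hpau hpbe
      have hue : u + e • h = v := by
        rw [smul_eq_mul, he, div_mul_cancel₀ _ hne]
        ring
      rw [hq] at hkey
      simp only at hkey
      rw [hue] at hkey
      rw [div_lt_iff₀ he0] at hkey
      have he' : e * h = v - u := by
        rw [he, div_mul_cancel₀ _ hne]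
      have h6 : s * h * e = s * (v - u) := by rw [mul_assoc, mul_comm h e, he']
      rw [h6] at hkey
      show φ' v - φ' 0 - s * v < φ' u - φ' 0 - s * u
      linarith
  exact Filter.le_limsup_of_frequently_le hfreq hbdd'
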